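/- arXiv:1903.09406 — 3 statements merged into one kernel-verified Lean document; each statement's English description precedes it below -/
import Mathlib

section
/- (Confluence Lemma) Let E be a row-finite graph, F_E the free commutative monoid on E^0, → the reflexive-transitive closure of the one-step rewriting relation, and ~ the congruence on F_E generated by →. For nonzero a, b ∈ F_E, a ~ b if and only if there exists nonzero c ∈ F_E with a → c and b → c. -/
set_option linter.unusedSectionVars false

/-- The algebraic preorder on a commutative monoid: `a ≤ b` iff `b = a + c` for some `c`. -/
def algLE {M : Type*} [AddCommMonoid M] (a b : M) : Prop := ∃ c, b = a + c

/-- A row-finite directed graph: vertices `V`, edges `Ed`, source `s`, range `r`,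
and for each vertex the (finite) set of edges it emits. -/
structure RFGraph (V : Type) (Ed : Type) where
  s : Ed → V
  r : Ed → V
  emit : V → Finset Ed
  mem_emit : ∀ e v, e ∈ emit v ↔ s e = v

namespace RFGraph

variable {V Ed : Type} [DecidableEq V] (G : RFGraph V Ed)

/-- The one-step rewriting relation `→₁` on the free commutative monoid `Multiset V`:
replace one occurrence of a non-sink vertex `v` by the sum of ranges of edges emitted by `v`. -/
def Step1 (a b : Multiset V) : Prop :=
  ∃ v : V, v ∈ a ∧ G.emit v ≠ ∅ ∧ b = a.erase v + (G.emit v).val.map G.r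

/-- The reflexive-transitive closure `→` of `→₁`. -/
def Step : Multiset V → Multiset V → Prop := Relation.ReflTransGen G.Step1

/-- The congruence on the free commutative monoid generated by `→₁`. -/
def gcon : AddCon (Multiset V) := addConGen G.Step1

/-- The graph monoid `M_E`. -/
def GM := G.gcon.Quotient

instance : AddCommMonoid G.GM := inferInstanceAs (AddCommMonoid G.gcon.Quotient)

/-- One-step rewriting for the talented monoid: replace `v(i)` by `Σ_{e ∈ s⁻¹(v)} r(e)(i+1)`. -/
def TStep1 (a b : Multiset (V × ℤ)) : Prop :=
  ∃ (v : V) (i : ℤ), (v, i) ∈ a ∧ G.emit v ≠ ∅ ∧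
    b = a.erase (v, i) + (G.emit v).val.map (fun e => (G.r e, i + 1))

/-- The congruence generated by the talented one-step relation. -/
def tcon : AddCon (Multiset (V × ℤ)) := addConGen G.TStep1

/-- The talented monoid `M_E^{gr}`. -/
def TM := G.tcon.Quotient

instance : AddCommMonoid G.TM := inferInstanceAs (AddCommMonoid G.tcon.Quotient)

/-- The generator `v(i)` of the talented monoid. -/
def tgen (v : V) (i : ℤ) : G.TM := G.tcon.mk' {(v, i)}

/-- The shift `v(i) ↦ v(i+n)` on the free commutative monoid `Multiset (V × ℤ)`. -/
def shiftMul (n : ℤ) : Multiset (V × ℤ) →+ Multiset (V × ℤ) where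
  toFun a := a.map fun p => (p.1, p.2 + n)
  map_zero' := rfl
  map_add' a b := Multiset.map_add (fun p => (p.1, p.2 + n)) a b

lemma shift_inj (n : ℤ) : Function.Injective (fun p : V × ℤ => (p.1, p.2 + n)) := by
  rintro ⟨a, b⟩ ⟨c, d⟩ h
  simp only [Prod.mk.injEq] at h
  exact Prod.ext h.1 (by omega)

lemma tstep1_shift (n : ℤ) {a b : Multiset (V × ℤ)} (h : G.TStep1 a b) :
    G.TStep1 (shiftMul n a) (shiftMul n b) := by
  obtain ⟨v, i, hv, hne, rfl⟩ := h
  refine ⟨v, i + n, Multiset.mem_map.2 ⟨(v, i), hv, rfl⟩, hne, ?_⟩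
  show Multiset.map _ _ = _
  rw [Multiset.map_add]
  congr 1
  · exact (Multiset.map_erase _ (shift_inj n) (v, i) a)
  · rw [Multiset.map_map]
    congr 1
    funext e
    simp only [Function.comp_apply]
    congr 1
    omega

lemma tcon_shift (n : ℤ) {a b : Multiset (V × ℤ)} (h : G.tcon a b) :
    G.tcon (shiftMul n a) (shiftMul n b) := by
  have hle : addConGen G.TStep1 ≤
      { r := fun a b => G.tcon (shiftMul n a) (shiftMul n b)
        iseqv := ⟨fun _ => G.tcon.refl _, fun h => G.tcon.symm h,
          fun h₁ h₂ => G.tcon.trans h₁ h₂⟩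
        add' := fun h₁ h₂ => by
          simpa only [map_add] using G.tcon.add h₁ h₂ } := by
    refine AddCon.addConGen_le.2 fun x y hxy => ?_
    exact AddConGen.Rel.of _ _ (G.tstep1_shift n hxy)
  exact hle h

/-- The `ℤ`-action on the talented monoid, `ⁿ(v(i)) = v(i+n)`. -/
def tshift (n : ℤ) : G.TM →+ G.TM :=
  G.tcon.lift (G.tcon.mk'.comp (shiftMul n)) (by
    intro a b h
    show G.tcon.mk' (shiftMul n a) = G.tcon.mk' (shiftMul n b)
    exact (AddCon.eq _).2 (G.tcon_shift n h))

/-- Reachability: there is a (possibly trivial) path from `u` to `v`. -/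
def Reaches (u v : V) : Prop :=
  Relation.ReflTransGen (fun a b => ∃ e : Ed, G.s e = a ∧ G.r e = b) u v

/-- A cycle: a nonempty path of edges, closed up, with distinct source vertices. -/
def IsCycle (p : List Ed) : Prop :=
  ∃ h : p ≠ [], List.Chain' (fun e f => G.r e = G.s f) p ∧
    G.r (p.getLast h) = G.s (p.head h) ∧ (p.map G.s).Nodup

/-- The cycle `p` has an exit: some vertex on it emits an edge not on the cycle. -/
def HasExit (p : List Ed) : Prop :=
  ∃ e : Ed, (∃ f ∈ p, G.s e = G.s f) ∧ e ∉ p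

/-- The cycle `p` has no exit: every vertex on it emits exactly its cycle edge. -/
def NoExit (p : List Ed) : Prop :=
  ∀ e ∈ p, G.emit (G.s e) = {e}

/-- `ℤ`-order-ideals of the talented monoid. -/
def IsOrderIdeal (I : Set G.TM) : Prop :=
  (0 : G.TM) ∈ I ∧ (∀ a b : G.TM, a ∈ I → b ∈ I → a + b ∈ I) ∧
    (∀ (n : ℤ) (a : G.TM), a ∈ I → G.tshift n a ∈ I) ∧
    (∀ a b : G.TM, algLE a b → b ∈ I → a ∈ I)

/-- The smallest `ℤ`-order-ideal of `M_E^{gr}` containing `v(0)`. -/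
def genIdeal (v : V) : Set G.TM :=
  ⋂₀ {I : Set G.TM | G.IsOrderIdeal I ∧ G.tgen v 0 ∈ I}

/-- Minimality in the talented monoid: `0 ≠ b ≤ a` implies `a ≤ b`. -/
def TMin (a : G.TM) : Prop := ∀ b : G.TM, b ≠ 0 → algLE b a → algLE a b

/-- The covering graph `\bar E`. -/
def cover : RFGraph (V × ℤ) (Ed × ℤ) where
  s p := (G.s p.1, p.2)
  r p := (G.r p.1, p.2 + 1)
  emit p := (G.emit p.1).map ⟨fun e => (e, p.2), fun a b h => by
    simpa using congrArg Prod.fst h⟩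
  mem_emit := by
    rintro ⟨e, n⟩ ⟨v, m⟩
    simp only [Finset.mem_map, Function.Embedding.coeFn_mk, Prod.mk.injEq, G.mem_emit]
    constructor
    · rintro ⟨a, ha, rfl, rfl⟩; exact ⟨ha, rfl⟩
    · rintro ⟨rfl, rfl⟩; exact ⟨e, rfl, rfl⟩

/-- The set of vertices on a cycle. -/
def cycVerts (p : List Ed) : Set V := {v | ∃ e ∈ p, G.s e = v}

end RFGraph

namespace RFGraph

variable {V Ed : Type} [DecidableEq V] (G : RFGraph V Ed)

lemma step1_ne_zero {a b : Multiset V} (h : G.Step1 a b) : b ≠ 0 := by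
  obtain ⟨v, hv, hne, rfl⟩ := h
  intro h0
  apply hne
  have h1 : Multiset.map G.r (G.emit v).val = 0 :=
    Multiset.le_zero.mp (h0 ▸ le_add_self)
  rw [Multiset.map_eq_zero] at h1
  exact Finset.val_eq_zero.mp h1

lemma step_ne_zero {a b : Multiset V} (h : G.Step a b) (ha : a ≠ 0) : b ≠ 0 := by
  induction h with
  | refl => exact ha
  | tail _ h ih => exact G.step1_ne_zero h

lemma step1_add {a b : Multiset V} (x : Multiset V) (h : G.Step1 a b) :
    G.Step1 (a + x) (b + x) := by
  obtain ⟨v, hv, hne, rfl⟩ := h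
  refine ⟨v, Multiset.mem_add.2 (Or.inl hv), hne, ?_⟩
  rw [Multiset.erase_add_left_pos x hv, add_right_comm]

lemma step_add {a b : Multiset V} (x : Multiset V) (h : G.Step a b) :
    G.Step (a + x) (b + x) := by
  induction h with
  | refl => exact Relation.ReflTransGen.refl
  | tail _ h ih => exact ih.tail (G.step1_add x h)

lemma step_add' {a b a' b' : Multiset V} (h : G.Step a b) (h' : G.Step a' b') :
    G.Step (a + a') (b + b') := by
  refine (G.step_add a' h).trans ?_
  rw [add_comm b a', add_comm b b']
  exact G.step_add b h'

lemma step1_diamond {a b c : Multiset V} (hab : G.Step1 a b) (hac : G.Step1 a c) :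
    ∃ d, Relation.ReflGen G.Step1 b d ∧ Relation.ReflTransGen G.Step1 c d := by
  obtain ⟨v, hv, hnev, rfl⟩ := hab
  obtain ⟨w, hw, hnew, rfl⟩ := hac
  by_cases hvw : v = w
  · subst hvw
    exact ⟨_, Relation.ReflGen.refl, Relation.ReflTransGen.refl⟩
  · have hw' : w ∈ a.erase v := Multiset.mem_erase_of_ne (fun h => hvw h.symm) |>.2 hw
    have hv' : v ∈ a.erase w := (Multiset.mem_erase_of_ne hvw).2 hv
    refine ⟨(a.erase v).erase w + (G.emit v).val.map G.r + (G.emit w).val.map G.r,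
      Relation.ReflGen.single ⟨w, ?_, hnew, ?_⟩,
      Relation.ReflTransGen.single ⟨v, ?_, hnev, ?_⟩⟩
    · exact Multiset.mem_add.2 (Or.inl hw')
    · rw [Multiset.erase_add_left_pos _ hw']
    · exact Multiset.mem_add.2 (Or.inl hv')
    · rw [Multiset.erase_add_left_pos _ hv', Multiset.erase_comm, add_right_comm]

lemma step1_subset_gcon {a b : Multiset V} (h : G.Step1 a b) : G.gcon a b :=
  AddConGen.Rel.of _ _ h

lemma step_subset_gcon {a b : Multiset V} (h : G.Step a b) : G.gcon a b := by
  induction h with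
  | refl => exact G.gcon.refl _
  | tail _ h ih => exact G.gcon.trans ih (G.step1_subset_gcon h)

/-- The join relation as a congruence. -/
def joinCon : AddCon (Multiset V) where
  r := Relation.Join G.Step
  iseqv := Relation.equivalence_join_reflTransGen (fun _ _ _ hb hc => G.step1_diamond hb hc)
  add' := by
    rintro _ _ _ _ ⟨c, hac, hbc⟩ ⟨c', hac', hbc'⟩
    exact ⟨c + c', G.step_add' hac hac', G.step_add' hbc hbc'⟩

lemma gcon_iff_join {a b : Multiset V} : G.gcon a b ↔ Relation.Join G.Step a b := by
  constructor
  · intro h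
    refine (AddCon.addConGen_le.2 (fun x y hxy => ?_) : G.gcon ≤ G.joinCon) h
    exact ⟨y, Relation.ReflTransGen.single hxy, Relation.ReflTransGen.refl⟩
  · rintro ⟨c, hac, hbc⟩
    exact G.gcon.trans (G.step_subset_gcon hac) (G.gcon.symm (G.step_subset_gcon hbc))

end RFGraph

/-- (The Confluence Lemma) For nonzero `a, b` in the free commutative monoid on `E⁰`,
`a = b` holds in the graph monoid `M_E` if and only if there is a nonzero `c` with
`a → c` and `b → c`. -/

theorem confluence {V Ed : Type} [DecidableEq V] (G : RFGraph V Ed)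
    (a b : Multiset V) (ha : a ≠ 0) (hb : b ≠ 0) :
    G.gcon a b ↔ ∃ c : Multiset V, c ≠ 0 ∧ G.Step a c ∧ G.Step b c := by
  rw [G.gcon_iff_join]
  constructor
  · rintro ⟨c, hac, hbc⟩
    exact ⟨c, G.step_ne_zero hac ha, hac, hbc⟩
  · rintro ⟨c, _, hac, hbc⟩
    exact ⟨c, hac, hbc⟩
end

section
/- Let E be a row-finite graph and M_E^{gr} its talented monoid with ℤ-action ^n(v(i)) = v(i+n) and algebraic preorder a ≤ b iff ∃c, b = a + c. For any a ∈ M_E^{gr} and any negative integer n, it is not the case that ^n a < a (i.e., it is impossible that a = ^n a + x with x ≠ 0). -/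
set_option linter.unusedSectionVars false

namespace RFGraph

variable {V Ed : Type} [DecidableEq V] (G : RFGraph V Ed)

/-- Weight function: `fWt t v` counts the leaves of the full rewriting tree of depth `t`
rooted at `v` (stopping at sinks). -/
def fWt : ℕ → V → ℕ
  | 0, _ => 1
  | t+1, v => if (G.emit v).card = 0 then 1 else ∑ e ∈ G.emit v, fWt t (G.r e)

lemma fWt_succ_of_ne {v : V} (hne : G.emit v ≠ ∅) (t : ℕ) :
    G.fWt (t+1) v = ∑ e ∈ G.emit v, G.fWt t (G.r e) := by
  rw [fWt, if_neg (by simpa [Finset.card_eq_zero] using hne)]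

lemma fWt_pos (t : ℕ) (v : V) : 1 ≤ G.fWt t v := by
  induction t generalizing v with
  | zero => simp [fWt]
  | succ t ih =>
    by_cases h : G.emit v = ∅
    · rw [fWt, if_pos (by simp [h])]
    · rw [G.fWt_succ_of_ne h]
      obtain ⟨e, he⟩ := Finset.nonempty_iff_ne_empty.2 h
      calc 1 ≤ G.fWt t (G.r e) := ih _
        _ ≤ _ := Finset.single_le_sum (f := fun e => G.fWt t (G.r e)) (fun i _ => Nat.zero_le _) he

lemma fWt_le_succ (t : ℕ) (v : V) : G.fWt t v ≤ G.fWt (t+1) v := by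
  induction t generalizing v with
  | zero => exact G.fWt_pos 1 v
  | succ t ih =>
    by_cases h : G.emit v = ∅
    · rw [fWt, if_pos (by simp [h]), fWt, if_pos (by simp [h])]
    · rw [G.fWt_succ_of_ne h, G.fWt_succ_of_ne h]
      exact Finset.sum_le_sum fun e _ => ih _

lemma fWt_mono {s t : ℕ} (h : s ≤ t) (v : V) : G.fWt s v ≤ G.fWt t v :=
  monotone_nat_of_le_succ (fun t => G.fWt_le_succ t v) h

/-- The level-`k` weight of a multiset. -/
def psiW (k : ℤ) (μ : Multiset (V × ℤ)) : ℕ :=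
  (μ.map fun p => G.fWt (k - p.2).toNat p.1).sum

lemma psiW_add (k : ℤ) (μ ν : Multiset (V × ℤ)) :
    G.psiW k (μ + ν) = G.psiW k μ + G.psiW k ν := by
  simp [psiW, Multiset.map_add]

lemma psiW_step {μ ν : Multiset (V × ℤ)} (h : G.TStep1 μ ν) :
    ∃ N : ℤ, ∀ k ≥ N, G.psiW k μ = G.psiW k ν := by
  obtain ⟨v, i, hv, hne, rfl⟩ := h
  refine ⟨i + 1, fun k hk => ?_⟩
  have hμ : μ = (v, i) ::ₘ μ.erase (v, i) := (Multiset.cons_erase hv).symm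
  have h1 : G.psiW k μ = G.fWt (k - i).toNat v + G.psiW k (μ.erase (v, i)) := by
    conv_lhs => rw [hμ]
    simp [psiW]
  have h2 : G.psiW k ((G.emit v).val.map (fun e => (G.r e, i + 1)))
      = ∑ e ∈ G.emit v, G.fWt (k - (i+1)).toNat (G.r e) := by
    simp only [psiW, Multiset.map_map, Function.comp]
    rfl
  have h3 : (k - i).toNat = (k - (i+1)).toNat + 1 := by omega
  rw [G.psiW_add, h1, h2, h3, G.fWt_succ_of_ne hne]
  omega

/-- `psiW` is eventually (in the level `k`) invariant under the congruence. -/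
lemma psiW_tcon {μ ν : Multiset (V × ℤ)} (h : G.tcon μ ν) :
    ∃ N : ℤ, ∀ k ≥ N, G.psiW k μ = G.psiW k ν := by
  have hle : addConGen G.TStep1 ≤
      { r := fun μ ν => ∃ N : ℤ, ∀ k ≥ N, G.psiW k μ = G.psiW k ν
        iseqv := ⟨fun μ => ⟨0, fun _ _ => rfl⟩,
          fun ⟨N, h⟩ => ⟨N, fun k hk => (h k hk).symm⟩,
          fun ⟨N, h⟩ ⟨M, g⟩ => ⟨max N M, fun k hk =>
            (h k (le_trans (le_max_left _ _) hk)).trans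
              (g k (le_trans (le_max_right _ _) hk))⟩⟩
        add' := fun ⟨N, h⟩ ⟨M, g⟩ => ⟨max N M, fun k hk => by
          rw [G.psiW_add, G.psiW_add, h k (le_trans (le_max_left _ _) hk),
            g k (le_trans (le_max_right _ _) hk)]⟩ } := by
    refine AddCon.addConGen_le.2 fun x y hxy => ?_
    exact G.psiW_step hxy
  exact hle h

end RFGraph

/-- For any `a ∈ M_E^{gr}` and any negative integer `n`, it is impossible that
`ⁿa < a`, i.e. that `a = ⁿa + x` with `x ≠ 0`. -/
theorem not_shift_lt {V Ed : Type} [DecidableEq V] (G : RFGraph V Ed)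
    (a : G.TM) (n : ℤ) (hn : n < 0) :
    ¬ ∃ x : G.TM, x ≠ 0 ∧ a = G.tshift n a + x := by
  rintro ⟨x, hx, heq⟩
  obtain ⟨α, rfl⟩ := G.tcon.mk'_surjective a
  obtain ⟨ξ, rfl⟩ := G.tcon.mk'_surjective x
  have hξ : ξ ≠ 0 := by
    rintro rfl
    exact hx (map_zero _)
  have hshift : G.tshift n (G.tcon.mk' α) = G.tcon.mk' (RFGraph.shiftMul n α) := by
    show G.tcon.lift _ _ _ = _
    rfl
  rw [hshift] at heq
  replace heq : G.tcon.mk' α = G.tcon.mk' (RFGraph.shiftMul n α + ξ) := by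
    rw [map_add]; exact heq
  have hcon : G.tcon α (RFGraph.shiftMul n α + ξ) := (AddCon.eq _).1 heq
  obtain ⟨N, hN⟩ := G.psiW_tcon hcon
  have h1 : G.psiW N α = G.psiW N (RFGraph.shiftMul n α) + G.psiW N ξ := by
    rw [← G.psiW_add]; exact hN N le_rfl
  have h2 : G.psiW N α ≤ G.psiW N (RFGraph.shiftMul n α) := by
    show _ ≤ G.psiW N (α.map fun p => (p.1, p.2 + n))
    unfold RFGraph.psiW
    rw [Multiset.map_map]
    refine Multiset.sum_map_le_sum_map _ _ fun p _ => ?_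
    show G.fWt (N - p.2).toNat p.1 ≤ G.fWt (N - (p.2 + n)).toNat p.1
    exact G.fWt_mono (Int.toNat_le_toNat (by omega)) _
  have h3 : 1 ≤ G.psiW N ξ := by
    obtain ⟨p, hp⟩ := Multiset.exists_mem_of_ne_zero hξ
    calc 1 ≤ G.fWt (N - p.2).toNat p.1 := G.fWt_pos _ _
      _ ≤ G.psiW N ξ :=
        Multiset.single_le_sum (fun _ _ => Nat.zero_le _) _
          (Multiset.mem_map.2 ⟨p, hp, rfl⟩)
  omega
end

section
/- Let E be a row-finite graph and u, v ∈ E^0. If there exists a vertex w with paths from both u and v to w (u and v are downward directed), then the ℤ-order-ideals of M_E^{gr} generated by u and by v have nonzero intersection. -/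
set_option linter.unusedSectionVars false

namespace RFGraph
section Aux

variable {V Ed : Type} [DecidableEq V] (G : RFGraph V Ed)

lemma algLE_refl {M : Type*} [AddCommMonoid M] (a : M) : algLE a a := ⟨0, (add_zero a).symm⟩

lemma algLE_trans {M : Type*} [AddCommMonoid M] {a b c : M} (h₁ : algLE a b) (h₂ : algLE b c) :
    algLE a c := by
  obtain ⟨x, rfl⟩ := h₁; obtain ⟨y, rfl⟩ := h₂; exact ⟨x + y, add_assoc _ _ _⟩

lemma algLE_map {M N : Type*} [AddCommMonoid M] [AddCommMonoid N] (f : M →+ N) {a b : M}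
    (h : algLE a b) : algLE (f a) (f b) := by
  obtain ⟨c, rfl⟩ := h; exact ⟨f c, by rw [map_add]⟩

lemma tgen_ne_zero (w : V) (i : ℤ) : G.tgen w i ≠ 0 := by
  intro h
  have h0 : G.tcon {(w, i)} 0 := (AddCon.eq _).1 h
  have hle : addConGen G.TStep1 ≤
      { r := fun a b : Multiset (V × ℤ) => (a = 0 ↔ b = 0)
        iseqv := ⟨fun _ => Iff.rfl, Iff.symm, Iff.trans⟩
        add' := fun h₁ h₂ => by
          constructor <;> intro h <;>
            simp_all [Multiset.eq_zero_iff_forall_notMem] } := by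
    refine AddCon.addConGen_le.2 fun x y hxy => ?_
    obtain ⟨v0, i0, hv, hne, rfl⟩ := hxy
    constructor
    · rintro rfl; simp at hv
    · intro h
      exfalso
      apply hne
      rw [add_eq_zero, Multiset.map_eq_zero] at h
      exact Finset.val_eq_zero.mp h.2
  have := hle h0
  have this : ({(w, i)} : Multiset (V × ℤ)) = 0 ↔ (0 : Multiset (V × ℤ)) = 0 := this
  exact absurd (this.2 rfl) (by simp)

lemma tshift_tgen (m : ℤ) (a : V) (i : ℤ) : G.tshift m (G.tgen a i) = G.tgen a (i + m) := by
  show G.tcon.mk' (RFGraph.shiftMul m {(a, i)}) = G.tcon.mk' {(a, i + m)}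
  congr 1

lemma edge_algLE {e : Ed} {a c : V} (hs : G.s e = a) (hr : G.r e = c) :
    algLE (G.tgen c 1) (G.tgen a 0) := by
  have he : e ∈ G.emit a := (G.mem_emit e a).2 hs
  have hne : G.emit a ≠ ∅ := fun h => by simp [h] at he
  have hstep : G.TStep1 {(a, 0)} ((G.emit a).val.map fun e => (G.r e, (0:ℤ) + 1)) := by
    refine ⟨a, 0, Multiset.mem_singleton_self _, hne, ?_⟩
    simp [Multiset.erase_singleton]
  have heq : G.tgen a 0 = G.tcon.mk' ((G.emit a).val.map fun e => (G.r e, (0:ℤ) + 1)) := by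
    exact (AddCon.eq _).2 (AddConGen.Rel.of _ _ hstep)
  have hmem : ((c, (1:ℤ))) ∈ (G.emit a).val.map fun e => (G.r e, (0:ℤ) + 1) := by
    refine Multiset.mem_map.2 ⟨e, he, ?_⟩
    simp [hr]
  obtain ⟨t, ht⟩ := Multiset.exists_cons_of_mem hmem
  refine ⟨G.tcon.mk' t, ?_⟩
  rw [heq, ht]
  show G.tcon.mk' _ = _
  rw [← Multiset.singleton_add, map_add]
  rfl

lemma reaches_algLE {u w : V} (h : G.Reaches u w) :
    ∃ n : ℤ, algLE (G.tgen w n) (G.tgen u 0) := by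
  induction h using Relation.ReflTransGen.head_induction_on with
  | refl => exact ⟨0, algLE_refl _⟩
  | head hedge _ ih =>
    obtain ⟨e, hs, hr⟩ := hedge
    obtain ⟨n, hle⟩ := ih
    refine ⟨n + 1, ?_⟩
    have h1 := algLE_map (G.tshift 1) hle
    rw [tshift_tgen, tshift_tgen, zero_add] at h1
    exact algLE_trans h1 (G.edge_algLE hs hr)

lemma tgen_mem_genIdeal {u w : V} (h : G.Reaches u w) :
    G.tgen w 0 ∈ G.genIdeal u := by
  obtain ⟨n, hle⟩ := G.reaches_algLE h
  intro I hI
  obtain ⟨⟨_, _, hshift, hdown⟩, hu⟩ := hI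
  have h1 : G.tgen w n ∈ I := hdown _ _ hle hu
  have h2 := hshift (-n) _ h1
  rwa [tshift_tgen, add_neg_cancel] at h2

end Aux
end RFGraph

/-- If `u` and `v` are downward directed (there are paths from both to a common vertex
`w`), then the `ℤ`-order-ideals `⟨u⟩` and `⟨v⟩` have nonzero intersection. -/
theorem downward_directed_ideals {V Ed : Type} [DecidableEq V] (G : RFGraph V Ed)
    (u v w : V) (hu : G.Reaches u w) (hv : G.Reaches v w) :
    ∃ x : G.TM, x ≠ 0 ∧ x ∈ G.genIdeal u ∧ x ∈ G.genIdeal v :=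
  ⟨G.tgen w 0, G.tgen_ne_zero w 0, G.tgen_mem_genIdeal hu, G.tgen_mem_genIdeal hv⟩
end
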